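/- Let n ≥ 1 and let H_n be the group presented by generators e₁, e₂ and relations [e₁,e₂]e₁ = e₁[e₁,e₂], [e₁,e₂]e₂ = e₂[e₁,e₂], e₁^n = 1, e₂^n = 1, where [e₁,e₂] = e₁e₂e₁^{−1}e₂^{−1}. Then H_n is a finite group of order n³. -/

import Mathlib

/-- The first generator `e₁` of the free group on two generators. -/
def e₁ : FreeGroup (Fin 2) := FreeGroup.of 0

/-- The second generator `e₂` of the free group on two generators. -/
def e₂ : FreeGroup (Fin 2) := FreeGroup.of 1

/-- The commutator `[e₁,e₂] = e₁e₂e₁⁻¹e₂⁻¹`. -/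
def commE : FreeGroup (Fin 2) := e₁ * e₂ * e₁⁻¹ * e₂⁻¹

/-- The relators of the Heisenberg group
`H_n = ⟨e₁, e₂ | [e₁,e₂]e₁ = e₁[e₁,e₂], [e₁,e₂]e₂ = e₂[e₁,e₂], e₁ⁿ = e₂ⁿ = 1⟩`. -/
def heisenbergRels (n : ℕ) : Set (FreeGroup (Fin 2)) :=
  {commE * e₁ * (e₁ * commE)⁻¹, commE * e₂ * (e₂ * commE)⁻¹, e₁ ^ n, e₂ ^ n}

/-- Concrete model of the Heisenberg group mod `n`. -/
@[ext]
structure Heis (n : ℕ) where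
  a : ZMod n
  b : ZMod n
  c : ZMod n

namespace Heis

variable {n : ℕ}

instance : Mul (Heis n) := ⟨fun p q => ⟨p.a + q.a, p.b + q.b, p.c + q.c + p.a * q.b⟩⟩
instance : One (Heis n) := ⟨⟨0, 0, 0⟩⟩
instance : Inv (Heis n) := ⟨fun p => ⟨-p.a, -p.b, p.a * p.b - p.c⟩⟩

@[simp] lemma mul_def (p q : Heis n) :
    p * q = ⟨p.a + q.a, p.b + q.b, p.c + q.c + p.a * q.b⟩ := rfl

@[simp] lemma one_def : (1 : Heis n) = ⟨0, 0, 0⟩ := rfl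

@[simp] lemma inv_def (p : Heis n) : p⁻¹ = ⟨-p.a, -p.b, p.a * p.b - p.c⟩ := rfl

instance : Group (Heis n) where
  mul_assoc p q r := by ext <;> simp <;> ring
  one_mul p := by ext <;> simp
  mul_one p := by ext <;> simp
  inv_mul_cancel p := by ext <;> simp

lemma x_pow (k : ℕ) : (⟨1, 0, 0⟩ : Heis n) ^ k = ⟨(k : ZMod n), 0, 0⟩ := by
  induction k with
  | zero => simp
  | succ k ih => rw [pow_succ, ih]; ext <;> push_cast <;> simp

lemma y_pow (k : ℕ) : (⟨0, 1, 0⟩ : Heis n) ^ k = ⟨0, (k : ZMod n), 0⟩ := by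
  induction k with
  | zero => simp
  | succ k ih => rw [pow_succ, ih]; ext <;> push_cast <;> simp

lemma z_pow (k : ℕ) : (⟨0, 0, 1⟩ : Heis n) ^ k = ⟨0, 0, (k : ZMod n)⟩ := by
  induction k with
  | zero => simp
  | succ k ih => rw [pow_succ, ih]; ext <;> push_cast <;> simp

/-- `Heis n` is equivalent to a triple of `ZMod n`s. -/
def equivProd : Heis n ≃ ZMod n × ZMod n × ZMod n where
  toFun p := (p.a, p.b, p.c)
  invFun t := ⟨t.1, t.2.1, t.2.2⟩
  left_inv p := rfl
  right_inv t := rfl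

end Heis

section PowLemmas

variable {G : Type*} [Group G] {n : ℕ} {x : G}

lemma hpow_mod (h : x ^ n = 1) (k : ℕ) : x ^ (k % n) = x ^ k := by
  conv_rhs => rw [← Nat.mod_add_div k n, pow_add, pow_mul, h, one_pow, mul_one]

lemma hpow_val_add [NeZero n] (h : x ^ n = 1) (s t : ZMod n) :
    x ^ (s + t).val = x ^ s.val * x ^ t.val := by
  rw [ZMod.val_add, hpow_mod h, pow_add]

lemma hpow_val_natCast [NeZero n] (h : x ^ n = 1) (k : ℕ) :
    x ^ ((k : ZMod n)).val = x ^ k := by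
  rw [ZMod.val_natCast, hpow_mod h]

lemma hpow_val_neg [NeZero n] (h : x ^ n = 1) (s : ZMod n) :
    x ^ (-s).val = (x ^ s.val)⁻¹ := by
  refine eq_inv_of_mul_eq_one_left ?_
  rw [← hpow_val_add h, neg_add_cancel, ZMod.val_zero, pow_zero]

/-- If `x*y = z*(y*x)` with `z` commuting with `x` and `y`, then
`x^k * y = z^k * (y * x^k)`. -/
lemma comm_pow_left {y z : G} (hxy : x * y = z * (y * x))
    (hzx : Commute z x) (hzy : Commute z y) (k : ℕ) :
    x ^ k * y = z ^ k * (y * x ^ k) := by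
  induction k with
  | zero => simp
  | succ k ih =>
    have hzkx : z ^ k * x = x * z ^ k := (hzx.pow_left k).eq
    calc x ^ (k + 1) * y = x * (x ^ k * y) := by rw [pow_succ', mul_assoc]
      _ = x * z ^ k * (y * x ^ k) := by rw [ih, mul_assoc]
      _ = z ^ k * (x * y * x ^ k) := by rw [← hzkx, mul_assoc, mul_assoc]
      _ = z ^ k * (z * (y * x) * x ^ k) := by rw [hxy]
      _ = z ^ (k + 1) * (y * x ^ (k + 1)) := by
          rw [pow_succ' x, pow_succ z]
          simp only [mul_assoc]

/-- If `x*y = z*(y*x)` with `z` commuting with `x` and `y`, then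
`x * y^k = z^k * (y^k * x)`. -/
lemma comm_pow_right {y z : G} (hxy : x * y = z * (y * x))
    (hzx : Commute z x) (hzy : Commute z y) (k : ℕ) :
    x * y ^ k = z ^ k * (y ^ k * x) := by
  induction k with
  | zero => simp
  | succ k ih =>
    have hzyk : z * y ^ k = y ^ k * z := (hzy.pow_right k).eq
    calc x * y ^ (k + 1) = (x * y ^ k) * y := by rw [pow_succ, mul_assoc]
      _ = z ^ k * (y ^ k * (x * y)) := by rw [ih]; simp only [mul_assoc]
      _ = z ^ k * (y ^ k * (z * (y * x))) := by rw [hxy]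
      _ = z ^ (k + 1) * (y ^ (k + 1) * x) := by
          rw [pow_succ z, pow_succ y, ← mul_assoc (y ^ k) z, ← hzyk]
          simp only [mul_assoc]

end PowLemmas

/-- the Heisenberg group `H_n` is a finite group of order `n³`. -/
theorem heisenberg_card (n : ℕ) (hn : 1 ≤ n) :
    Nat.card (PresentedGroup (heisenbergRels n)) = n ^ 3 := by
  haveI : NeZero n := ⟨by omega⟩
  set PG := PresentedGroup (heisenbergRels n) with hPG
  let π : FreeGroup (Fin 2) →* PG := PresentedGroup.mk _
  have hrel : ∀ r ∈ heisenbergRels n, π r = 1 := by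
    intro r hr
    exact (QuotientGroup.eq_one_iff r).mpr (Subgroup.subset_normalClosure hr)
  set X : PG := PresentedGroup.of 0 with hX
  set Y : PG := PresentedGroup.of 1 with hY
  set Z : PG := X * Y * X⁻¹ * Y⁻¹ with hZdef
  have hπ1 : π e₁ = X := rfl
  have hπ2 : π e₂ = Y := rfl
  have hπc : π commE = Z := by
    simp only [commE, map_mul, map_inv, hπ1, hπ2, hZdef]
  -- relations in PG
  have hZX : Z * X = X * Z := by
    have := hrel _ (by simp [heisenbergRels] : commE * e₁ * (e₁ * commE)⁻¹ ∈ heisenbergRels n)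
    rw [map_mul, map_inv, map_mul, map_mul, hπ1, hπc, mul_inv_eq_one] at this
    exact this
  have hZY : Z * Y = Y * Z := by
    have := hrel _ (by simp [heisenbergRels] : commE * e₂ * (e₂ * commE)⁻¹ ∈ heisenbergRels n)
    rw [map_mul, map_inv, map_mul, map_mul, hπ2, hπc, mul_inv_eq_one] at this
    exact this
  have hXn : X ^ n = 1 := by
    have := hrel _ (by simp [heisenbergRels] : e₁ ^ n ∈ heisenbergRels n)
    rwa [map_pow, hπ1] at this
  have hYn : Y ^ n = 1 := by
    have := hrel _ (by simp [heisenbergRels] : e₂ ^ n ∈ heisenbergRels n)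
    rwa [map_pow, hπ2] at this
  have cZX : Commute Z X := hZX
  have cZY : Commute Z Y := hZY
  have hXY : X * Y = Z * (Y * X) := by
    rw [hZdef]; group
  have hZn : Z ^ n = 1 := by
    have h := comm_pow_left hXY cZX cZY n
    rw [hXn, one_mul, mul_one] at h
    -- h : Y = Z ^ n * Y
    have h2 : Z ^ n * Y = 1 * Y := by rw [one_mul, ← h]
    exact mul_right_cancel h2
  -- Z is central
  have hZc : ∀ w : PG, Commute Z w := by
    have hgen : ∀ w : PG, w ∈ Subgroup.centralizer {Z} := by
      intro w
      refine PresentedGroup.generated_by (heisenbergRels n) _ ?_ w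
      intro j
      rw [Subgroup.mem_centralizer_iff]
      intro h hh
      rw [Set.mem_singleton_iff] at hh
      subst hh
      fin_cases j
      · exact hZX
      · exact hZY
    intro w
    exact Subgroup.mem_centralizer_iff.mp (hgen w) Z rfl
  have cZ : ∀ (w : PG) (j : ℕ), Commute (Z ^ j) w := fun w j => (hZc w).pow_left j
  have hXYk : ∀ k : ℕ, X * Y ^ k = Z ^ k * (Y ^ k * X) := comm_pow_right hXY cZX cZY
  have hYX : ∀ j : ℕ, Y ^ j * X = X * Y ^ j * (Z ^ j)⁻¹ := by
    intro j
    have h := hXYk j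
    have h2 : (Z ^ j)⁻¹ * (X * Y ^ j) = Y ^ j * X := by rw [h]; group
    rw [← h2, ((cZ (X * Y ^ j) j).inv_left).eq]
  have hYXinv : ∀ j : ℕ, Y ^ j * X⁻¹ = X⁻¹ * (Y ^ j * Z ^ j) := by
    intro j
    have h := hXYk j
    calc Y ^ j * X⁻¹ = X⁻¹ * (X * Y ^ j) * X⁻¹ := by group
      _ = X⁻¹ * (Z ^ j * (Y ^ j * X)) * X⁻¹ := by rw [h]
      _ = X⁻¹ * (Z ^ j * Y ^ j) := by group
      _ = X⁻¹ * (Y ^ j * Z ^ j) := by rw [(cZ (Y ^ j) j).eq]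
  -- the enumeration map
  set g : ZMod n × ZMod n × ZMod n → PG :=
    fun t => X ^ t.1.val * Y ^ t.2.1.val * Z ^ t.2.2.val with hg
  -- power-exponent bookkeeping
  have hXadd : ∀ s : ZMod n, X ^ (s + 1).val = X ^ s.val * X := by
    intro s
    rw [hpow_val_add hXn, show (1 : ZMod n) = ((1 : ℕ) : ZMod n) by norm_num,
      hpow_val_natCast hXn 1, pow_one]
  have hXsub : ∀ s : ZMod n, X ^ (s - 1).val = X ^ s.val * X⁻¹ := by
    intro s
    rw [sub_eq_add_neg, hpow_val_add hXn, hpow_val_neg hXn,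
      show (1 : ZMod n) = ((1 : ℕ) : ZMod n) by norm_num, hpow_val_natCast hXn 1, pow_one]
  have hYadd : ∀ s : ZMod n, Y ^ (s + 1).val = Y ^ s.val * Y := by
    intro s
    rw [hpow_val_add hYn, show (1 : ZMod n) = ((1 : ℕ) : ZMod n) by norm_num,
      hpow_val_natCast hYn 1, pow_one]
  have hYsub : ∀ s : ZMod n, Y ^ (s - 1).val = Y ^ s.val * Y⁻¹ := by
    intro s
    rw [sub_eq_add_neg, hpow_val_add hYn, hpow_val_neg hYn,
      show (1 : ZMod n) = ((1 : ℕ) : ZMod n) by norm_num, hpow_val_natCast hYn 1, pow_one]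
  have hZsub : ∀ s t : ZMod n, Z ^ (s - t).val = Z ^ s.val * (Z ^ t.val)⁻¹ := by
    intro s t
    rw [sub_eq_add_neg, hpow_val_add hZn, hpow_val_neg hZn]
  have hZadd : ∀ s t : ZMod n, Z ^ (s + t).val = Z ^ s.val * Z ^ t.val := fun s t =>
    hpow_val_add hZn s t
  -- closure of the range of g under right multiplication by generators
  have hstepX : ∀ t, ∃ t', g t * X = g t' := by
    rintro ⟨a, b, c⟩
    refine ⟨(a + 1, b, c - b), ?_⟩
    simp only [hg, hXadd, hZsub]
    simp only [mul_assoc]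
    rw [(cZ X c.val).eq, ← mul_assoc (Y ^ b.val) X, hYX b.val]
    simp only [mul_assoc]
    rw [((cZ (Z ^ c.val) b.val).inv_left).eq]
  have hstepY : ∀ t, ∃ t', g t * Y = g t' := by
    rintro ⟨a, b, c⟩
    refine ⟨(a, b + 1, c), ?_⟩
    simp only [hg, hYadd]
    simp only [mul_assoc]
    rw [(cZ Y c.val).eq]
  have hstepXinv : ∀ t, ∃ t', g t * X⁻¹ = g t' := by
    rintro ⟨a, b, c⟩
    refine ⟨(a - 1, b, c + b), ?_⟩
    simp only [hg, hXsub, hZadd]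
    simp only [mul_assoc]
    rw [((cZ X c.val).inv_right).eq, ← mul_assoc (Y ^ b.val) X⁻¹, hYXinv b.val]
    simp only [mul_assoc]
    rw [(cZ (Z ^ c.val) b.val).eq]
  have hstepYinv : ∀ t, ∃ t', g t * Y⁻¹ = g t' := by
    rintro ⟨a, b, c⟩
    refine ⟨(a, b - 1, c), ?_⟩
    simp only [hg, hYsub]
    simp only [mul_assoc]
    rw [((cZ Y c.val).inv_right).eq]
  -- every element of PG is in the range of g
  have main : ∀ w : FreeGroup (Fin 2), ∀ t, ∃ t', g t * π w = g t' := by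
    intro w
    induction w using FreeGroup.induction_on with
    | C1 => intro t; exact ⟨t, by simp⟩
    | of i =>
      intro t
      fin_cases i
      · exact hstepX t
      · exact hstepY t
    | inv_of i _ =>
      intro t
      fin_cases i
      · rw [map_inv]; exact hstepXinv t
      · rw [map_inv]; exact hstepYinv t
    | mul w1 w2 ih1 ih2 =>
      intro t
      obtain ⟨t1, h1⟩ := ih1 t
      obtain ⟨t2, h2⟩ := ih2 t1
      exact ⟨t2, by rw [map_mul, ← mul_assoc, h1, h2]⟩
  have hg_surj : Function.Surjective g := by
    intro p
    obtain ⟨w, hw⟩ := PresentedGroup.mk_surjective (heisenbergRels n) p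
    obtain ⟨t', ht'⟩ := main w (0, 0, 0)
    refine ⟨t', ?_⟩
    rw [← ht', hw]
    simp [hg, ZMod.val_zero]
  -- the homomorphism to the concrete model
  let f : Fin 2 → Heis n := ![⟨1, 0, 0⟩, ⟨0, 1, 0⟩]
  have hlift : ∀ r ∈ heisenbergRels n, FreeGroup.lift f r = 1 := by
    intro r hr
    simp only [heisenbergRels, Set.mem_insert_iff, Set.mem_singleton_iff] at hr
    rcases hr with rfl | rfl | rfl | rfl
    · simp only [commE, e₁, e₂, map_mul, map_inv, FreeGroup.lift_apply_of]
      ext <;> simp [f] <;> ring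
    · simp only [commE, e₁, e₂, map_mul, map_inv, FreeGroup.lift_apply_of]
      ext <;> simp [f] <;> ring
    · simp only [e₁, map_pow, FreeGroup.lift_apply_of]
      show (f 0) ^ n = 1
      simp [f, Heis.x_pow, ZMod.natCast_self]
    · simp only [e₂, map_pow, FreeGroup.lift_apply_of]
      show (f 1) ^ n = 1
      simp [f, Heis.y_pow, ZMod.natCast_self]
  let φ : PG →* Heis n := PresentedGroup.toGroup hlift
  have hφX : φ X = ⟨1, 0, 0⟩ := by
    rw [hX]; rw [PresentedGroup.toGroup.of]; simp [f]
  have hφY : φ Y = ⟨0, 1, 0⟩ := by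
    rw [hY]; rw [PresentedGroup.toGroup.of]; simp [f]
  have hφZ : φ Z = ⟨0, 0, 1⟩ := by
    rw [hZdef]
    rw [map_mul, map_mul, map_mul, map_inv, map_inv, hφX, hφY]
    ext <;> simp <;> ring
  have hφg : ∀ t : ZMod n × ZMod n × ZMod n,
      φ (g t) = ⟨t.1, t.2.1, t.1 * t.2.1 + t.2.2⟩ := by
    rintro ⟨a, b, c⟩
    simp only [hg, map_mul, map_pow, hφX, hφY, hφZ, Heis.x_pow, Heis.y_pow, Heis.z_pow]
    ext <;> simp [ZMod.natCast_val, ZMod.cast_id] <;> ring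
  have hg_inj : Function.Injective g := by
    rintro ⟨a, b, c⟩ ⟨a', b', c'⟩ h
    have h2 := congrArg φ h
    rw [hφg, hφg] at h2
    simp only [Heis.mk.injEq] at h2
    obtain ⟨ha, hb, hc⟩ := h2
    subst ha; subst hb
    have : c = c' := by
      have := hc
      exact add_left_cancel this
    subst this
    rfl
  rw [← Nat.card_eq_of_bijective g ⟨hg_inj, hg_surj⟩]
  simp only [Nat.card_prod, Nat.card_zmod]
  ring
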